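/- For the adding machine T on the Cantor set, every point x whose code is eventually all 1's (i.e., x is a right endpoint of a construction interval) satisfies liminf_{n→∞} n^{1/β} |T^n(x) - x| = 1, where β = log_3(2). -/

import Mathlib

open MeasureTheory Filter
open scoped Classical

/-- The point of the middle-third Cantor set with ternary code `x`
(digit `true` ↦ 2, `false` ↦ 0): `x = Σ_{k≥1} 2 x_k / 3^k`. -/
noncomputable def cantorVal (x : ℕ → Bool) : ℝ :=
  ∑' k : ℕ, (if x k then 2 else 0) / 3 ^ (k + 1)

/-- The adding machine on codes: set the first digit equal to `false` (i.e. 0) to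
`true` (i.e. 1) and all earlier digits to `false`; `111... ↦ 000...`. -/
noncomputable def addingMachine (x : ℕ → Bool) : ℕ → Bool :=
  if h : ∃ n, x n = false then
    fun k => if k < Nat.find h then false else if k = Nat.find h then true else x k
  else fun _ => false

/-- prepend a digit -/
def cons (b : Bool) (s : ℕ → Bool) : ℕ → Bool := fun k => match k with
  | 0 => b
  | k+1 => s k

lemma addingMachine_cons_false (s : ℕ → Bool) :
    addingMachine (cons false s) = cons true s := by
  have h : ∃ n, cons false s n = false := ⟨0, rfl⟩
  have hf : Nat.find h = 0 := by
    rw [Nat.find_eq_iff]; exact ⟨rfl, fun n hn => absurd hn (Nat.not_lt_zero n)⟩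
  rw [addingMachine, dif_pos h]
  funext k
  cases k with
  | zero => rw [hf]; simp [cons]
  | succ k => rw [hf]; simp [cons]

lemma addingMachine_cons_true (s : ℕ → Bool) :
    addingMachine (cons true s) = cons false (addingMachine s) := by
  by_cases hs : ∃ n, s n = false
  · have h : ∃ n, cons true s n = false := ⟨Nat.find hs + 1, Nat.find_spec hs⟩
    have hf : Nat.find h = Nat.find hs + 1 := by
      rw [Nat.find_eq_iff]
      refine ⟨Nat.find_spec hs, fun n hn => ?_⟩
      cases n with
      | zero => simp [cons]
      | succ n => simpa [cons] using Nat.find_min hs (by omega)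
    rw [addingMachine, dif_pos h, addingMachine, dif_pos hs]
    funext k
    cases k with
    | zero => simp [hf, cons]
    | succ k =>
      rw [hf]; simp only [cons]
      by_cases h1 : k < Nat.find hs
      · simp [h1, Nat.succ_lt_succ h1]
      · by_cases h2 : k = Nat.find hs
        · simp [h2]
        · have : ¬ (k+1 < Nat.find hs + 1) := by omega
          have : ¬ (k+1 = Nat.find hs + 1) := by omega
          simp only [if_neg ‹¬ (k+1 < Nat.find hs + 1)›, if_neg ‹¬ (k+1 = Nat.find hs + 1)›,
            if_neg h1, if_neg h2]
  · have h : ¬ ∃ n, cons true s n = false := by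
      rintro ⟨n, hn⟩
      cases n with
      | zero => simp [cons] at hn
      | succ n => exact hs ⟨n, hn⟩
    rw [addingMachine, dif_neg h, addingMachine, dif_neg hs]
    funext k
    cases k with
    | zero => rfl
    | succ k => rfl


def natCode (a : ℕ) : ℕ → Bool := fun k => a.testBit k
def mix (m N : ℕ) : ℕ → Bool := fun k => if k < N then m.testBit k else true

lemma natCode_eq_cons (a : ℕ) : natCode a = cons (a.testBit 0) (natCode (a/2)) := by
  funext k; cases k with
  | zero => rfl
  | succ k => simp [natCode, cons, Nat.testBit_succ]

lemma mix_eq_cons (m N : ℕ) : mix m (N+1) = cons (m.testBit 0) (mix (m/2) N) := by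
  funext k; cases k with
  | zero => simp [mix, cons]
  | succ k =>
    simp only [mix, cons, Nat.testBit_succ, Nat.add_lt_add_iff_right]

lemma testBit_zero_true_iff (a : ℕ) : a.testBit 0 = true ↔ a % 2 = 1 := by
  simp [Nat.testBit_eq_decide_div_mod_eq]

lemma succ_div_two_of_even {a : ℕ} (h : a % 2 = 0) : (a+1)/2 = a/2 := by omega
lemma succ_div_two_of_odd {a : ℕ} (h : a % 2 = 1) : (a+1)/2 = a/2 + 1 := by omega

lemma addingMachine_natCode (a : ℕ) : addingMachine (natCode a) = natCode (a+1) := by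
  induction a using Nat.strong_induction_on with
  | _ a ih =>
    rcases Nat.even_or_odd a with he | ho
    · have h0 : a % 2 = 0 := Nat.even_iff.mp he
      rw [natCode_eq_cons a, natCode_eq_cons (a+1)]
      have hb : a.testBit 0 = false := by
        simp [Nat.testBit_eq_decide_div_mod_eq, h0]
      have hb1 : (a+1).testBit 0 = true := by
        simp [Nat.testBit_eq_decide_div_mod_eq, Nat.succ_mod_two_eq_one_iff.mpr h0]
      rw [hb, hb1, addingMachine_cons_false, succ_div_two_of_even h0]
    · have h0 : a % 2 = 1 := Nat.odd_iff.mp ho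
      have hb : a.testBit 0 = true := (testBit_zero_true_iff a).mpr h0
      have hb1 : (a+1).testBit 0 = false := by
        simp [Nat.testBit_eq_decide_div_mod_eq, Nat.succ_mod_two_eq_zero_iff.mpr h0]
      rw [natCode_eq_cons a, natCode_eq_cons (a+1), hb, hb1, addingMachine_cons_true,
        succ_div_two_of_odd h0]
      rw [ih (a/2) (by omega)]

lemma addingMachine_mix {a N : ℕ} (h : a + 1 < 2^N) :
    addingMachine (mix a N) = mix (a+1) N := by
  induction N generalizing a with
  | zero => simp at h
  | succ N ih =>
    rcases Nat.even_or_odd a with he | ho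
    · have h0 : a % 2 = 0 := Nat.even_iff.mp he
      have hb : a.testBit 0 = false := by simp [Nat.testBit_eq_decide_div_mod_eq, h0]
      have hb1 : (a+1).testBit 0 = true := by
        simp [Nat.testBit_eq_decide_div_mod_eq, Nat.succ_mod_two_eq_one_iff.mpr h0]
      rw [mix_eq_cons, mix_eq_cons, hb, hb1, addingMachine_cons_false,
        succ_div_two_of_even h0]
    · have h0 : a % 2 = 1 := Nat.odd_iff.mp ho
      have hb : a.testBit 0 = true := (testBit_zero_true_iff a).mpr h0
      have hb1 : (a+1).testBit 0 = false := by
        simp [Nat.testBit_eq_decide_div_mod_eq, Nat.succ_mod_two_eq_zero_iff.mpr h0]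
      rw [mix_eq_cons, mix_eq_cons, hb, hb1, addingMachine_cons_true,
        succ_div_two_of_odd h0, ih (by rw [pow_succ] at h; omega)]

lemma mix_top (N : ℕ) : mix (2^N - 1) N = fun _ => true := by
  funext k
  simp only [mix, Nat.testBit_two_pow_sub_one]
  split <;> simp_all

lemma addingMachine_allTrue : addingMachine (fun _ => true) = natCode 0 := by
  rw [addingMachine, dif_neg (by simp)]
  funext k; simp [natCode]

/-- iterating from `mix m N`, after `2^N - m` steps we reach `natCode 0`. -/
lemma iterate_mix {m N : ℕ} (hm : m < 2^N) :
    addingMachine^[2^N - m] (mix m N) = natCode 0 := by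
  obtain ⟨d, hd⟩ : ∃ d, 2^N - 1 = m + d := ⟨2^N - 1 - m, by omega⟩
  have key : ∀ i ≤ d, addingMachine^[i] (mix m N) = mix (m + i) N := by
    intro i hi
    induction i with
    | zero => simp
    | succ i ih2 =>
      rw [Function.iterate_succ_apply', ih2 (by omega), addingMachine_mix (by omega)]
      ring_nf
  have h2 : 2^N - m = d + 1 := by omega
  rw [h2, Function.iterate_succ_apply', key d le_rfl,
    show m + d = 2^N - 1 by omega, mix_top, addingMachine_allTrue]

lemma iterate_mix' {m N : ℕ} (hm : m < 2^N) {n : ℕ} (hn : 2^N - m ≤ n) :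
    addingMachine^[n] (mix m N) = natCode (n - (2^N - m)) := by
  obtain ⟨j, hj⟩ : ∃ j, n = (2^N - m) + j := ⟨n - (2^N - m), by omega⟩
  subst hj
  rw [add_comm, Function.iterate_add_apply, iterate_mix hm]
  have : ∀ j, addingMachine^[j] (natCode 0) = natCode j := by
    intro j
    induction j with
    | zero => rfl
    | succ j ih => rw [Function.iterate_succ_apply', ih, addingMachine_natCode]
  rw [this, Nat.add_sub_cancel]

/-- complementarity of bits below v when 2^v ∣ j+m+1 -/
lemma bits_compl {v : ℕ} : ∀ j m : ℕ, (j + m + 1) % 2^v = 0 →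
    ∀ k < v, j.testBit k = !m.testBit k := by
  induction v with
  | zero => intro j m _ k hk; omega
  | succ v ih =>
    intro j m h k hk
    have hpar : (j + m + 1) % 2 = 0 := by
      have h2 := Nat.mod_mod_of_dvd (j+m+1) (dvd_pow_self 2 (Nat.succ_ne_zero v))
      rw [h] at h2
      omega
    have hjm : j % 2 + m % 2 = 1 := by omega
    cases k with
    | zero =>
      rcases Nat.eq_zero_or_pos (j % 2) with h0 | h0
      · have h1 : m % 2 = 1 := by omega
        simp [Nat.testBit_eq_decide_div_mod_eq, h0, h1]
      · have h1 : j % 2 = 1 := by omega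
        have h1' : m % 2 = 0 := by omega
        simp [Nat.testBit_eq_decide_div_mod_eq, h1, h1']
    | succ k =>
      have hsum : j + m + 1 = 2 * (j/2 + m/2 + 1) := by omega
      have h' : (j/2 + m/2 + 1) % 2^v = 0 := by
        have hmm := Nat.mul_mod_mul_left 2 (j/2 + m/2 + 1) (2^v)
        rw [← hsum, show 2 * 2^v = 2^(v+1) by ring, h] at hmm
        omega
      rw [Nat.testBit_succ, Nat.testBit_succ]
      exact ih (j/2) (m/2) h' k (by omega)

/-- equality of bits at v when (j+m+1) % 2^(v+1) = 2^v -/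
lemma bits_eq_at {v : ℕ} : ∀ j m : ℕ, (j + m + 1) % 2^(v+1) = 2^v →
    j.testBit v = m.testBit v := by
  induction v with
  | zero =>
    intro j m h
    simp only [pow_one, pow_zero] at h
    have h1 : j % 2 = m % 2 := by omega
    simp [Nat.testBit_eq_decide_div_mod_eq, h1]
  | succ v ih =>
    intro j m h
    have hpar : (j + m + 1) % 2 = 0 := by
      have h2 := Nat.mod_mod_of_dvd (j+m+1) (dvd_pow_self 2 (Nat.succ_ne_zero (v+1)))
      rw [h] at h2
      have h3 : 2^(v+1) = 2 * 2^v := by ring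
      omega
    have hsum : j + m + 1 = 2 * (j/2 + m/2 + 1) := by omega
    have h' : (j/2 + m/2 + 1) % 2^(v+1) = 2^v := by
      have hmm := Nat.mul_mod_mul_left 2 (j/2 + m/2 + 1) (2^(v+1))
      rw [← hsum, show (2:ℕ) * 2^(v+1) = 2^(v+2) from by ring, h] at hmm
      have h3 : (2:ℕ)^(v+1) = 2*2^v := by ring
      omega
    rw [Nat.testBit_succ, Nat.testBit_succ]
    exact ih (j/2) (m/2) h'

lemma exists_val {n : ℕ} (h : 1 ≤ n) : ∃ v, n % 2^(v+1) = 2^v ∧ 2^v ≤ n := by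
  induction n using Nat.strong_induction_on with
  | _ n ih =>
    rcases Nat.even_or_odd n with he | ho
    · have h0 : n % 2 = 0 := Nat.even_iff.mp he
      obtain ⟨v, hv1, hv2⟩ := ih (n/2) (by omega) (by omega)
      refine ⟨v+1, ?_, ?_⟩
      · have hmm := Nat.mul_mod_mul_left 2 (n/2) (2^(v+1))
        have hn2 : 2*(n/2) = n := by omega
        rw [hv1, hn2, show (2:ℕ) * 2^(v+1) = 2^(v+2) from by ring,
          show (2:ℕ) * 2^v = 2^(v+1) from by ring] at hmm
        show n % 2^(v+2) = 2^(v+1)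
        exact hmm
      · have : (2:ℕ)^(v+1) = 2 * 2^v := by ring
        omega
    · exact ⟨0, by simpa using Nat.odd_iff.mp ho, by simpa using h⟩

lemma odd_part {n v : ℕ} (h : n % 2^(v+1) = 2^v) : ∃ q, n = 2^v * (2*q+1) := by
  refine ⟨n / 2^(v+1), ?_⟩
  conv_lhs => rw [← Nat.div_add_mod n (2^(v+1)), h]
  rw [show (2:ℕ)^(v+1) = 2*2^v from by ring]
  ring

noncomputable def term (y : ℕ → Bool) (k : ℕ) : ℝ := (if y k then 2 else 0) / 3 ^ (k + 1)

lemma term_nonneg (y : ℕ → Bool) (k : ℕ) : 0 ≤ term y k := by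
  unfold term; positivity

lemma term_le (y : ℕ → Bool) (k : ℕ) : term y k ≤ 2 / 3 ^ (k+1) := by
  unfold term
  gcongr
  split <;> norm_num

lemma summable_term (y : ℕ → Bool) : Summable (term y) := by
  refine Summable.of_nonneg_of_le (term_nonneg y) (term_le y) ?_
  have : Summable (fun k : ℕ => (2:ℝ)/3 * (1/3)^k) :=
    (summable_geometric_of_lt_one (by norm_num) (by norm_num)).mul_left _
  convert this using 2 with k
  rw [one_div_pow]
  field_simp
  ring

lemma cantorVal_eq (y : ℕ → Bool) : cantorVal y = ∑' k, term y k := rfl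

lemma geom_tail (v : ℕ) : ∑' k : ℕ, (2:ℝ)/3^(k+v+1) = ((3:ℝ)^v)⁻¹ := by
  have h1 : ∀ k : ℕ, (2:ℝ)/3^(k+v+1) = (2/3^(v+1)) * (1/3)^k := by
    intro k
    rw [pow_add, pow_add, one_div_pow]
    field_simp
    ring
  rw [tsum_congr h1, tsum_mul_left, tsum_geometric_of_lt_one (by norm_num) (by norm_num)]
  rw [pow_succ]
  field_simp
  ring

lemma summable_geom_tail (w : ℕ) : Summable (fun k : ℕ => (2:ℝ)/3^(k+w+1)) := by
  have h1 : ∀ k : ℕ, (2:ℝ)/3^(k+w+1) = (2/3^(w+1)) * (1/3)^k := by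
    intro k
    rw [pow_add, pow_add, one_div_pow]
    field_simp
    ring
  rw [funext h1]
  exact (summable_geometric_of_lt_one (by norm_num) (by norm_num)).mul_left _

lemma diff_eq (y z : ℕ → Bool) :
    cantorVal y - cantorVal z = ∑' k, (term y k - term z k) :=
  (Summable.tsum_sub (summable_term y) (summable_term z)).symm

lemma diff_term_abs_le (y z : ℕ → Bool) (k : ℕ) : |term y k - term z k| ≤ 2/3^(k+1) := by
  have h1 := term_nonneg y k
  have h2 := term_nonneg z k
  have h3 := term_le y k
  have h4 := term_le z k
  rw [abs_le]
  constructor <;> linarith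

/-- exact difference when y,z agree below v, and y=1,z=0 from v on -/
lemma cantor_diff_exact (y z : ℕ → Bool) (v : ℕ)
    (hlt : ∀ k < v, y k = z k) (hge : ∀ k, v ≤ k → y k = true ∧ z k = false) :
    cantorVal y - cantorVal z = ((3:ℝ)^v)⁻¹ := by
  rw [diff_eq]
  have hs : Summable (fun k => term y k - term z k) :=
    (summable_term y).sub (summable_term z)
  rw [← Summable.sum_add_tsum_nat_add v hs]
  have hz : ∀ i ∈ Finset.range v, term y i - term z i = 0 := by
    intro i hi
    rw [Finset.mem_range] at hi
    rw [term, term, hlt i hi]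
    ring
  rw [Finset.sum_eq_zero hz, zero_add]
  have ht : ∀ i : ℕ, term y (i+v) - term z (i+v) = 2/3^(i+v+1) := by
    intro i
    obtain ⟨h1, h2⟩ := hge (i+v) (by omega)
    rw [term, term, h1, h2]
    norm_num
  rw [tsum_congr ht, geom_tail]

/-- lower bound when y,z agree below v and differ at v -/
lemma cantor_diff_lower (y z : ℕ → Bool) (v : ℕ)
    (hlt : ∀ k < v, y k = z k) (hv : y v ≠ z v) :
    ((3:ℝ)^(v+1))⁻¹ ≤ |cantorVal y - cantorVal z| := by
  rw [diff_eq]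
  have hs : Summable (fun k => term y k - term z k) :=
    (summable_term y).sub (summable_term z)
  rw [← Summable.sum_add_tsum_nat_add (v+1) hs]
  have hz : ∀ i ∈ Finset.range (v+1), i ≠ v → term y i - term z i = 0 := by
    intro i hi hne
    rw [Finset.mem_range] at hi
    rw [term, term, hlt i (by omega)]
    ring
  rw [Finset.sum_eq_single_of_mem v (Finset.mem_range.mpr (by omega)) hz]
  have hvval : |term y v - term z v| = 2/3^(v+1) := by
    rw [term, term]
    cases hy : y v <;> cases hz' : z v <;> simp_all <;> positivity
  have htail : |∑' i : ℕ, (term y (i+(v+1)) - term z (i+(v+1)))| ≤ ((3:ℝ)^(v+1))⁻¹ := by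
    calc |∑' i : ℕ, (term y (i+(v+1)) - term z (i+(v+1)))|
        ≤ ∑' i : ℕ, |term y (i+(v+1)) - term z (i+(v+1))| := by
          simpa using norm_tsum_le_tsum_norm (f := fun i => term y (i+(v+1)) - term z (i+(v+1)))
            (by simpa [Real.norm_eq_abs] using (hs.comp_injective (add_left_injective (v+1))).abs)
      _ ≤ ∑' i : ℕ, (2:ℝ)/3^(i+(v+1)+1) := by
          apply Summable.tsum_le_tsum
          · intro i; exact diff_term_abs_le y z _
          · exact (hs.comp_injective (add_left_injective (v+1))).abs
          · exact summable_geom_tail (v+1)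
      _ = ((3:ℝ)^(v+1))⁻¹ := geom_tail (v+1)
  calc ((3:ℝ)^(v+1))⁻¹ = 2/3^(v+1) - ((3:ℝ)^(v+1))⁻¹ := by
        rw [eq_sub_iff_add_eq]
        field_simp
        norm_num
      _ ≤ |term y v - term z v| - |∑' i : ℕ, (term y (i+(v+1)) - term z (i+(v+1)))| := by
        rw [hvval]; linarith
      _ ≤ |term y v - term z v + ∑' i : ℕ, (term y (i+(v+1)) - term z (i+(v+1)))| := by
        have := abs_add_le (term y v - term z v + ∑' i : ℕ, (term y (i+(v+1)) - term z (i+(v+1)))) (-(∑' i : ℕ, (term y (i+(v+1)) - term z (i+(v+1)))))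
        simp only [add_neg_cancel_right, abs_neg] at this
        linarith

lemma exists_mix : ∀ (N : ℕ) (x : ℕ → Bool), (∀ k, N ≤ k → x k = true) →
    ∃ m, m < 2^N ∧ x = mix m N := by
  intro N
  induction N with
  | zero =>
    intro x hx
    refine ⟨0, by norm_num, funext fun k => ?_⟩
    simp [mix, hx k (Nat.zero_le k)]
  | succ N ih =>
    intro x hx
    obtain ⟨m, hm, hy⟩ := ih (fun k => x (k+1)) (fun k hk => hx (k+1) (by omega))
    refine ⟨(bif x 0 then 1 else 0) + 2*m, by cases h0 : x 0 <;> simp [h0] <;> omega, ?_⟩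
    have hmod : ((bif x 0 then 1 else 0) + 2*m) % 2 = (bif x 0 then 1 else 0) := by
      cases h0 : x 0 <;> simp [h0] <;> omega
    have hdiv : ((bif x 0 then 1 else 0) + 2*m) / 2 = m := by
      cases h0 : x 0 <;> simp [h0] <;> omega
    rw [mix_eq_cons, hdiv, ← hy]
    funext k
    cases k with
    | zero =>
      simp only [cons, Nat.testBit_eq_decide_div_mod_eq, Nat.pow_zero, Nat.div_one, hmod]
      cases h0 : x 0 <;> simp [h0]
    | succ k => rfl

theorem stmt_14 (x : ℕ → Bool) (hx : ∃ N : ℕ, ∀ k, N ≤ k → x k = true) :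
    liminf (fun n : ℕ =>
        (n : ℝ) ^ (1 / Real.logb 3 2) *
          |cantorVal (addingMachine^[n] x) - cantorVal x|) atTop = 1 := by
  obtain ⟨N, hN⟩ := hx
  obtain ⟨m, hm, rfl⟩ := exists_mix N x hN
  set L : ℝ := 1 / Real.logb 3 2 with hLdef
  set u : ℕ → ℝ := fun n =>
    (n : ℝ) ^ L * |cantorVal (addingMachine^[n] (mix m N)) - cantorVal (mix m N)| with hu
  set m' : ℕ := 2^N - 1 - m with hm'
  set N₀ : ℕ := 2^N - m with hN₀
  have hN₀m' : N₀ = m' + 1 := by omega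
  -- logarithm facts
  have hL : L = Real.logb 2 3 := by
    rw [hLdef, Real.logb, Real.logb, one_div_div]
  have hL1 : (1:ℝ) ≤ L := by
    rw [hL, show (1:ℝ) = Real.logb 2 2 from (Real.logb_self_eq_one (by norm_num)).symm]
    exact (Real.logb_le_logb (by norm_num) (by norm_num) (by norm_num)).mpr (by norm_num)
  have h2L : (2:ℝ) ^ L = 3 := by
    rw [hL]; exact Real.rpow_logb (by norm_num) (by norm_num) (by norm_num)
  have hpow : ∀ v : ℕ, ((2:ℝ)^v) ^ L = 3^v := by
    intro v
    rw [← Real.rpow_natCast 2 v, ← Real.rpow_mul (by norm_num), mul_comm,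
      Real.rpow_mul (by norm_num), h2L, Real.rpow_natCast]
  -- bit complement description of the code
  have hcomp : ∀ k, mix m N k = !(m'.testBit k) := by
    intro k
    by_cases hk : k < N
    · have h0 : (m + m' + 1) % 2^N = 0 := by
        rw [show m + m' + 1 = 2^N by omega, Nat.mod_self]
      simp only [mix, if_pos hk]
      exact bits_compl m m' h0 k hk
    · have h1 : m'.testBit k = false :=
        Nat.testBit_lt_two_pow (lt_of_lt_of_le (show m' < 2^N by omega)
          (Nat.pow_le_pow_right (by norm_num) (by omega)))
      simp [mix, hk, h1]
  -- lower bound for the distance for any n ≥ N₀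
  have hLOW : ∀ n, N₀ ≤ n → ∀ v, n % 2^(v+1) = 2^v →
      ((3:ℝ)^(v+1))⁻¹ ≤ |cantorVal (natCode (n - N₀)) - cantorVal (mix m N)| := by
    intro n hn v hv
    have hj : (n - N₀) + m' + 1 = n := by omega
    obtain ⟨q, hq⟩ := odd_part hv
    have hmod0 : n % 2^v = 0 := by rw [hq]; exact Nat.mul_mod_right _ _
    apply cantor_diff_lower
    · intro k hk
      have := bits_compl (v := v) (n - N₀) m' (by rw [hj]; exact hmod0) k hk
      rw [hcomp k]
      exact this
    · rw [hcomp v]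
      have := bits_eq_at (v := v) (n - N₀) m' (by rw [hj]; exact hv)
      show (n - N₀).testBit v ≠ !m'.testBit v
      rw [this]
      simp
  -- exact distance when n = 2^v, v ≥ N
  have hEXACT : ∀ v, N ≤ v →
      cantorVal (mix m N) - cantorVal (natCode (2^v - N₀)) = ((3:ℝ)^v)⁻¹ := by
    intro v hvN
    have h2 : (2:ℕ)^N ≤ 2^v := Nat.pow_le_pow_right (by norm_num) hvN
    have hv : (2^v) % 2^(v+1) = 2^v := Nat.mod_eq_of_lt (by
      have : (2:ℕ)^v < 2^(v+1) := by rw [pow_succ]; omega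
      exact this)
    have hj : (2^v - N₀) + m' + 1 = 2^v := by omega
    obtain ⟨q, hq⟩ := odd_part hv
    have hmod0 : (2^v) % 2^v = 0 := Nat.mod_self _
    apply cantor_diff_exact
    · intro k hk
      have := bits_compl (v := v) (2^v - N₀) m' (by rw [hj]; exact hmod0) k hk
      rw [hcomp k]
      exact this.symm
    · intro k hk
      constructor
      · simp [mix, show ¬ (k < N) by omega]
      · exact Nat.testBit_lt_two_pow (lt_of_lt_of_le (by omega)
          (Nat.pow_le_pow_right (by norm_num) hk))
  -- value of u at powers of two
  have hone : ∀ v, N ≤ v → u (2^v) = 1 := by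
    intro v hvN
    have h2 : (2:ℕ)^N ≤ 2^v := Nat.pow_le_pow_right (by norm_num) hvN
    have hit : addingMachine^[2^v] (mix m N) = natCode (2^v - N₀) :=
      iterate_mix' hm (by omega)
    have habs : |cantorVal (natCode (2^v - N₀)) - cantorVal (mix m N)| = ((3:ℝ)^v)⁻¹ := by
      rw [abs_sub_comm, hEXACT v hvN]
      exact abs_of_pos (by positivity)
    rw [hu]
    simp only
    rw [hit, habs]
    push_cast
    rw [hpow v]
    field_simp
  -- eventual lower bound
  have hev : ∀ n, 2^N ≤ n → 1 ≤ u n := by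
    intro n hn
    have hnN₀ : N₀ ≤ n := by omega
    have hn1 : 1 ≤ n := le_trans (Nat.one_le_two_pow) hn
    obtain ⟨v, hv, hv2⟩ := exists_val hn1
    obtain ⟨q, hq⟩ := odd_part hv
    have hit : addingMachine^[n] (mix m N) = natCode (n - N₀) :=
      iterate_mix' hm hnN₀
    rcases Nat.eq_zero_or_pos q with hq0 | hq1
    · subst hq0
      have hnv : n = 2^v := by omega
      have hvN : N ≤ v := by
        by_contra hcon
        have : (2:ℕ)^v < 2^N := Nat.pow_lt_pow_right (by norm_num) (by omega)
        omega
      rw [hnv, hone v hvN]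
    · -- q ≥ 1 : crude bound suffices
      have hd := hLOW n hnN₀ v hv
      rw [hu]
      simp only
      rw [hit]
      have hA : (3:ℝ)^v * (2*(q:ℝ)+1) ≤ (n:ℝ)^L := by
        have hcast : (n:ℝ) = (2:ℝ)^v * (2*(q:ℝ)+1) := by
          rw [hq]; push_cast; ring
        rw [hcast, Real.mul_rpow (by positivity) (by positivity), hpow v]
        have hq0 : (0:ℝ) ≤ (q:ℝ) := Nat.cast_nonneg q
        have h2 : (2*(q:ℝ)+1) ≤ (2*(q:ℝ)+1) ^ L := by
          nth_rewrite 1 [← Real.rpow_one (2*(q:ℝ)+1)]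
          exact Real.rpow_le_rpow_of_exponent_le (by linarith) hL1
        exact mul_le_mul_of_nonneg_left h2 (by positivity)
      have h3q : (3:ℝ) ≤ 2*(q:ℝ)+1 := by
        have : (1:ℕ) ≤ q := hq1
        push_cast
        have : (1:ℝ) ≤ (q:ℝ) := by exact_mod_cast this
        linarith
      have hApos : (0:ℝ) < 3^v * (2*(q:ℝ)+1) := by positivity
      calc (1:ℝ) = (3^v * 3) * ((3:ℝ)^(v+1))⁻¹ := by
            rw [pow_succ]; field_simp
        _ ≤ ((n:ℝ)^L) * |cantorVal (natCode (n - N₀)) - cantorVal (mix m N)| := by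
            apply mul_le_mul
            · calc (3:ℝ)^v * 3 ≤ 3^v * (2*(q:ℝ)+1) := by nlinarith [pow_pos (show (0:ℝ) < 3 by norm_num) v]
                _ ≤ (n:ℝ)^L := hA
            · exact hd
            · positivity
            · positivity
  -- conclude
  have hfreq : ∃ᶠ n in atTop, u n ≤ 1 := by
    rw [Filter.frequently_atTop]
    intro K
    refine ⟨2^(max N K), ?_, le_of_eq (hone _ (le_max_left _ _))⟩
    calc K ≤ max N K := le_max_right _ _
      _ ≤ 2^(max N K) := (Nat.lt_two_pow_self).le
  have hbdd : Filter.IsBoundedUnder (· ≥ ·) atTop u := by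
    refine ⟨0, Filter.eventually_map.mpr (Filter.Eventually.of_forall fun n => ?_)⟩
    simp only [hu]
    positivity
  have hcob : Filter.IsCoboundedUnder (· ≥ ·) atTop u :=
    Filter.IsCobounded.of_frequently_le (Filter.frequently_map.mpr hfreq)
  apply le_antisymm
  · exact Filter.liminf_le_of_frequently_le hfreq hbdd
  · exact Filter.le_liminf_of_le hcob
      ((Filter.eventually_atTop).mpr ⟨2^N, hev⟩)
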